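/- Let u ∈ C_{+,1/2}. Then the dual Legendre transform u*(r) = sup_{s≥0} e^{2√(rs)}/u(s) also belongs to C_{+,1/2}, and u* is increasing and (log, x²)-convex on [0,∞). -/

import Mathlib

noncomputable def dualL (u : ℝ → ℝ) (r : ℝ) : ℝ :=
  ⨆ s : {s : ℝ // 0 ≤ s}, Real.exp (2 * Real.sqrt (r * s)) / u s

namespace DualLAux

instance : Nonempty {s : ℝ // 0 ≤ s} := ⟨⟨0, le_refl 0⟩⟩

/-- The exponent family. -/
noncomputable def F (u : ℝ → ℝ) (x : ℝ) (s : {s : ℝ // 0 ≤ s}) : ℝ :=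
  2 * x * Real.sqrt s - Real.log (u s)

/-- The log-transform. -/
noncomputable def g (u : ℝ → ℝ) (x : ℝ) : ℝ := ⨆ s, F u x s

theorem bddF (u : ℝ → ℝ) (hpos : ∀ r ≥ 0, 0 < u r)
    (hcont : ContinuousOn u (Set.Ici 0))
    (hlim : Filter.Tendsto (fun r => Real.log (u r) / Real.sqrt r)
      Filter.atTop Filter.atTop) (x : ℝ) :
    BddAbove (Set.range (F u x)) := by
  obtain ⟨S₀, hS₀⟩ := (hlim.eventually_ge_atTop (2 * |x| + 1)).exists_forall_of_atTop
  set T := max S₀ 1 with hT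
  have hcont' : ContinuousOn (fun s : ℝ => 2 * x * Real.sqrt s - Real.log (u s))
      (Set.Icc 0 T) := by
    apply ContinuousOn.sub
    · exact continuousOn_const.mul (Real.continuous_sqrt.continuousOn)
    · exact ((hcont.mono Set.Icc_subset_Ici_self).log
        (fun s hs => (hpos s hs.1).ne'))
  obtain ⟨C, hC⟩ := (isCompact_Icc.image_of_continuousOn hcont').bddAbove
  refine ⟨max C 0, ?_⟩
  rintro _ ⟨s, rfl⟩
  by_cases hs : s.1 ≤ T
  · exact le_max_of_le_left (hC ⟨s.1, ⟨s.2, hs⟩, rfl⟩)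
  · push_neg at hs
    have hs1 : (1 : ℝ) ≤ s.1 := le_trans (le_max_right _ _) hs.le
    have hsq1 : (1 : ℝ) ≤ Real.sqrt s.1 := by
      rw [show (1:ℝ) = Real.sqrt 1 by simp]; exact Real.sqrt_le_sqrt hs1
    have hdiv : 2 * |x| + 1 ≤ Real.log (u s.1) / Real.sqrt s.1 :=
      hS₀ s.1 (le_trans (le_max_left _ _) hs.le)
    have hlog : (2 * |x| + 1) * Real.sqrt s.1 ≤ Real.log (u s.1) := by
      exact (le_div_iff₀ (by linarith)).1 hdiv
    have hxs : 2 * x * Real.sqrt s.1 ≤ 2 * |x| * Real.sqrt s.1 :=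
      mul_le_mul_of_nonneg_right (by linarith [le_abs_self x]) (Real.sqrt_nonneg _)
    have : F u x s ≤ 0 := by
      simp only [F]
      nlinarith
    exact this.trans (le_max_right _ _)

theorem g_convex (u : ℝ → ℝ) (hpos : ∀ r ≥ 0, 0 < u r)
    (hcont : ContinuousOn u (Set.Ici 0))
    (hlim : Filter.Tendsto (fun r => Real.log (u r) / Real.sqrt r)
      Filter.atTop Filter.atTop) :
    ConvexOn ℝ Set.univ (g u) := by
  refine ⟨convex_univ, fun x _ y _ a b ha hb hab => ?_⟩
  refine ciSup_le fun s => ?_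
  have h1 : F u (a • x + b • y) s = a * F u x s + b * F u y s := by
    simp only [F, smul_eq_mul]
    linear_combination (Real.log (u s.1)) * hab
  rw [h1]
  have h2 : a * F u x s ≤ a * g u x :=
    mul_le_mul_of_nonneg_left (le_ciSup (bddF u hpos hcont hlim x) s) ha
  have h3 : b * F u y s ≤ b * g u y :=
    mul_le_mul_of_nonneg_left (le_ciSup (bddF u hpos hcont hlim y) s) hb
  simpa [smul_eq_mul] using add_le_add h2 h3

theorem key (u : ℝ → ℝ) (hpos : ∀ r ≥ 0, 0 < u r)
    (hcont : ContinuousOn u (Set.Ici 0))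
    (hlim : Filter.Tendsto (fun r => Real.log (u r) / Real.sqrt r)
      Filter.atTop Filter.atTop) {r : ℝ} (hr : 0 ≤ r) :
    dualL u r = Real.exp (g u (Real.sqrt r)) := by
  have hfun : (fun s : {s : ℝ // 0 ≤ s} => Real.exp (2 * Real.sqrt (r * s)) / u s)
      = fun s => Real.exp (F u (Real.sqrt r) s) := by
    funext s
    rw [F, Real.exp_sub, Real.exp_log (hpos s.1 s.2), Real.sqrt_mul hr, mul_assoc]
  rw [dualL, hfun, g,
    Real.exp_monotone.map_ciSup_of_continuousAt (Real.continuous_exp.continuousAt)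
      (bddF u hpos hcont hlim _)]

end DualLAux

theorem dual_legendre_properties (u : ℝ → ℝ)
    (hpos : ∀ r ≥ 0, 0 < u r)
    (hcont : ContinuousOn u (Set.Ici 0))
    (hlim : Filter.Tendsto (fun r => Real.log (u r) / Real.sqrt r)
      Filter.atTop Filter.atTop) :
    (∀ r ≥ (0 : ℝ), 0 < dualL u r) ∧
    ContinuousOn (dualL u) (Set.Ici 0) ∧
    Filter.Tendsto (fun r => Real.log (dualL u r) / Real.sqrt r)
      Filter.atTop Filter.atTop ∧
    MonotoneOn (dualL u) (Set.Ici 0) ∧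
    ConvexOn ℝ (Set.Ici 0) (fun x : ℝ => Real.log (dualL u (x ^ 2))) := by
  have hkey := fun {r : ℝ} (hr : 0 ≤ r) => DualLAux.key u hpos hcont hlim hr
  have hbdd := DualLAux.bddF u hpos hcont hlim
  have hgconv := DualLAux.g_convex u hpos hcont hlim
  have hgcont : Continuous (DualLAux.g u) :=
    continuousOn_univ.1 (hgconv.continuousOn isOpen_univ)
  refine ⟨?_, ?_, ?_, ?_, ?_⟩
  · intro r hr
    rw [hkey hr]; exact Real.exp_pos _
  · exact ContinuousOn.congr
      ((Real.continuous_exp.comp (hgcont.comp Real.continuous_sqrt)).continuousOn)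
      (fun r hr => hkey hr)
  · rw [Filter.tendsto_atTop]
    intro M
    set s₀v : ℝ := ((|M| + 1) / 2) ^ 2 with hs₀v
    set s₀ : {s : ℝ // 0 ≤ s} := ⟨s₀v, sq_nonneg _⟩ with hs₀
    have hsq : Real.sqrt s₀v = (|M| + 1) / 2 := Real.sqrt_sq (by positivity)
    set c : ℝ := Real.log (u s₀v) with hc
    filter_upwards [Filter.eventually_ge_atTop (max 1 (c ^ 2))] with r hr
    have hr1 : (1 : ℝ) ≤ r := le_trans (le_max_left _ _) hr
    have hrc : c ^ 2 ≤ r := le_trans (le_max_right _ _) hr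
    have h0r : (0 : ℝ) ≤ r := by linarith
    have hsr : 0 < Real.sqrt r := Real.sqrt_pos.2 (by linarith)
    have hcr : c ≤ Real.sqrt r := by
      have h := Real.sqrt_le_sqrt hrc
      rw [Real.sqrt_sq_eq_abs] at h
      exact (le_abs_self c).trans h
    rw [hkey h0r, Real.log_exp]
    have hFle : 2 * Real.sqrt r * Real.sqrt s₀v - c ≤ DualLAux.g u (Real.sqrt r) :=
      le_ciSup (hbdd _) s₀
    have he : (2 * Real.sqrt r * Real.sqrt s₀v - c) / Real.sqrt r
        = 2 * Real.sqrt s₀v - c / Real.sqrt r := by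
      field_simp
    have h1 : M ≤ (2 * Real.sqrt r * Real.sqrt s₀v - c) / Real.sqrt r := by
      rw [he, hsq]
      have h2 : c / Real.sqrt r ≤ 1 := (div_le_one hsr).2 hcr
      have h3 := le_abs_self M
      linarith
    exact h1.trans (by gcongr)
  · intro x hx y hy hxy
    rw [hkey hx, hkey hy]
    have hgmono : DualLAux.g u (Real.sqrt x) ≤ DualLAux.g u (Real.sqrt y) := by
      refine ciSup_le fun s => le_trans ?_ (le_ciSup (hbdd _) s)
      simp only [DualLAux.F]
      have h1 : Real.sqrt x ≤ Real.sqrt y := Real.sqrt_le_sqrt hxy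
      have h2 : (0:ℝ) ≤ Real.sqrt s.1 := Real.sqrt_nonneg _
      nlinarith
    exact Real.exp_le_exp.2 hgmono
  · have heq : ∀ x : ℝ, 0 ≤ x → Real.log (dualL u (x ^ 2)) = DualLAux.g u x := fun x hx => by
      rw [hkey (sq_nonneg x), Real.log_exp, Real.sqrt_sq hx]
    refine ⟨convex_Ici 0, fun x hx y hy a b ha hb hab => ?_⟩
    have hmem : (0:ℝ) ≤ a • x + b • y := by
      simp only [smul_eq_mul]
      have hx' : (0:ℝ) ≤ x := hx
      have hy' : (0:ℝ) ≤ y := hy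
      positivity
    simp only [heq _ hmem, heq _ hx, heq _ hy]
    exact hgconv.2 (Set.mem_univ x) (Set.mem_univ y) ha hb hab
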